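/- Let {H_θ}_{θ>0} be random variables with |E[H_θ H_w]| ≤ C_β (θ/w)^β for all 0 < θ < w, where β > 0. Then for L_T := (1/log T) ∫_1^T (H_θ/θ) dθ one has E[L_T²] ≤ 2 C_β / (β log T) for all T > 1. -/

import Mathlib

open MeasureTheory Filter Set

theorem stmt1 {Ω : Type*} [MeasurableSpace Ω] (P : Measure Ω) [IsProbabilityMeasure P]
    (H : ℝ → Ω → ℝ) (β Cβ : ℝ) (hβ : 0 < β)
    (hcov : ∀ θ w : ℝ, 0 < θ → θ < w →
      |∫ ω, H θ ω * H w ω ∂P| ≤ Cβ * (θ / w) ^ β)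
    (L : ℝ → Ω → ℝ)
    (hL : ∀ T ω, L T ω = (Real.log T)⁻¹ * ∫ θ in Set.Ioc 1 T, H θ ω / θ)
    (hFubini : ∀ T : ℝ, 1 < T → ∫ ω, (L T ω) ^ 2 ∂P
      = ((Real.log T)⁻¹) ^ 2 *
          ∫ θ in Set.Ioc 1 T, ∫ w in Set.Ioc 1 T, (∫ ω, H θ ω * H w ω ∂P) / (θ * w))
    (hIntOn : ∀ T : ℝ, 1 < T → IntegrableOn
      (fun p : ℝ × ℝ => (∫ ω, H p.1 ω * H p.2 ω ∂P) / (p.1 * p.2))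
      (Set.Ioc 1 T ×ˢ Set.Ioc 1 T)) :
    ∀ T : ℝ, 1 < T → ∫ ω, (L T ω) ^ 2 ∂P ≤ 2 * Cβ / (β * Real.log T) := by
  intro T hT
  have hlogT : 0 < Real.log T := Real.log_pos hT
  -- Cβ is nonnegative
  have hCβ : 0 ≤ Cβ := by
    have h := hcov 1 2 one_pos one_lt_two
    have hpow : (0:ℝ) < ((1:ℝ)/2) ^ β := Real.rpow_pos_of_pos (by norm_num) β
    nlinarith [abs_nonneg (∫ ω, H 1 ω * H 2 ω ∂P)]
  set K : ℝ → ℝ → ℝ := fun θ w => ∫ ω, H θ ω * H w ω ∂P with hK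
  -- the dominating function
  set g : ℝ → ℝ → ℝ := fun θ w => Cβ * (min θ w / max θ w) ^ β / (θ * w) with hg
  have hKsymm : ∀ θ w, K θ w = K w θ := by
    intro θ w
    simp only [hK]
    congr 1
    ext ω
    ring
  -- pointwise bound: for θ ≠ w in the box, K θ w / (θ w) ≤ g θ w
  have hptbd : ∀ θ w : ℝ, 0 < θ → 0 < w → θ ≠ w → K θ w / (θ * w) ≤ g θ w := by
    intro θ w hθ hw hne
    have hθw : 0 < θ * w := mul_pos hθ hw
    rw [div_le_div_iff_of_pos_right hθw]
    calc K θ w ≤ |K θ w| := le_abs_self _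
      _ ≤ Cβ * (min θ w / max θ w) ^ β := by
          rcases lt_or_gt_of_ne hne with h | h
          · rw [min_eq_left h.le, max_eq_right h.le]
            exact hcov θ w hθ h
          · rw [min_eq_right h.le, max_eq_left h.le, hKsymm]
            exact hcov w θ hw h
  -- continuity of the slice of g
  have hgcont : ∀ θ : ℝ, θ ∈ Set.Ioc (1:ℝ) T →
      ContinuousOn (fun w => g θ w) (Set.Icc 1 T) := by
    intro θ hθ
    have hθ1 : (1:ℝ) ≤ θ := hθ.1.le
    apply ContinuousOn.div
    · apply ContinuousOn.mul continuousOn_const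
      apply ContinuousOn.rpow_const
      · exact ((continuousOn_const.inf continuousOn_id).div
          (continuousOn_const.sup continuousOn_id)
          (fun w hw => by positivity))
      · intro w hw
        left
        have hw1 : (1:ℝ) ≤ w := hw.1
        have : (0:ℝ) < min θ w / max θ w := by positivity
        exact ne_of_gt this
    · exact continuousOn_const.mul continuousOn_id
    · intro w hw
      have hw1 : (1:ℝ) ≤ w := hw.1
      positivity
  have hgint : ∀ θ : ℝ, θ ∈ Set.Ioc (1:ℝ) T →
      IntegrableOn (fun w => g θ w) (Set.Ioc 1 T) := by
    intro θ hθ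
    exact ((hgcont θ hθ).integrableOn_Icc).mono_set Set.Ioc_subset_Icc_self
  -- bound on the integral of the slice of g
  have hgbd : ∀ θ : ℝ, θ ∈ Set.Ioc (1:ℝ) T →
      ∫ w in Set.Ioc 1 T, g θ w ≤ 2 * Cβ / (β * θ) := by
    intro θ hθ
    obtain ⟨hθ1, hθT⟩ := hθ
    have hθ0 : (0:ℝ) < θ := lt_trans one_pos hθ1
    have hsplit : Set.Ioc (1:ℝ) θ ∪ Set.Ioc θ T = Set.Ioc 1 T :=
      Set.Ioc_union_Ioc_eq_Ioc hθ1.le hθT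
    have hi1 : IntegrableOn (fun w => g θ w) (Set.Ioc 1 θ) :=
      (hgint θ ⟨hθ1, hθT⟩).mono_set (Set.Ioc_subset_Ioc le_rfl hθT)
    have hi2 : IntegrableOn (fun w => g θ w) (Set.Ioc θ T) :=
      (hgint θ ⟨hθ1, hθT⟩).mono_set (Set.Ioc_subset_Ioc hθ1.le le_rfl)
    have hdisj : Disjoint (Set.Ioc (1:ℝ) θ) (Set.Ioc θ T) := Set.Ioc_disjoint_Ioc_of_le le_rfl
    rw [← hsplit, setIntegral_union hdisj measurableSet_Ioc hi1 hi2]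
    -- first piece
    have hp1 : ∫ w in Set.Ioc 1 θ, g θ w ≤ Cβ / (β * θ) := by
      have hcg : ∀ w ∈ Set.Ioc (1:ℝ) θ, g θ w = (Cβ / (θ ^ (β+1))) * w ^ (β - 1) := by
        intro w hw
        have hw0 : (0:ℝ) < w := lt_trans one_pos hw.1
        rw [hg]
        simp only
        rw [min_eq_right hw.2, max_eq_left hw.2]
        rw [Real.div_rpow hw0.le hθ0.le]
        rw [Real.rpow_add hθ0, Real.rpow_one, Real.rpow_sub hw0, Real.rpow_one]
        field_simp
      rw [setIntegral_congr_fun measurableSet_Ioc hcg]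
      rw [integral_const_mul]
      rw [← intervalIntegral.integral_of_le hθ1.le]
      rw [integral_rpow (Or.inl (by linarith))]
      have : β - 1 + 1 = β := by ring
      rw [this, Real.one_rpow]
      have hθβ : (0:ℝ) < θ ^ β := Real.rpow_pos_of_pos hθ0 β
      have hθβ1 : θ ^ (β+1) = θ ^ β * θ := by
        rw [Real.rpow_add hθ0, Real.rpow_one]
      rw [hθβ1]
      calc Cβ / (θ ^ β * θ) * ((θ ^ β - 1) / β)
          ≤ Cβ / (θ ^ β * θ) * (θ ^ β / β) := by gcongr; linarith
        _ = Cβ * (θ ^ β / β) / (θ ^ β * θ) := by ring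
        _ = Cβ / (β * θ) := by
            field_simp
    -- second piece
    have hp2 : ∫ w in Set.Ioc θ T, g θ w ≤ Cβ / (β * θ) := by
      have hcg : ∀ w ∈ Set.Ioc θ T, g θ w = (Cβ * θ ^ (β-1)) * w ^ (-β - 1) := by
        intro w hw
        have hw0 : (0:ℝ) < w := lt_trans hθ0 hw.1
        rw [hg]
        simp only
        rw [min_eq_left hw.1.le, max_eq_right hw.1.le]
        rw [Real.div_rpow hθ0.le hw0.le]
        rw [Real.rpow_sub hθ0, Real.rpow_one, Real.rpow_sub hw0,
          Real.rpow_neg hw0.le, Real.rpow_one]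
        field_simp
      rw [setIntegral_congr_fun measurableSet_Ioc hcg]
      rw [integral_const_mul]
      rw [← intervalIntegral.integral_of_le hθT]
      have h0T : (0:ℝ) ∉ Set.uIcc θ T := by
        rw [Set.uIcc_of_le hθT]
        intro h
        exact absurd h.1 (not_le.mpr hθ0)
      rw [integral_rpow (Or.inr ⟨by intro h; nlinarith [hβ], h0T⟩)]
      have : -β - 1 + 1 = -β := by ring
      rw [this]
      have hθβ : (0:ℝ) < θ ^ β := Real.rpow_pos_of_pos hθ0 β
      have hTβ : (0:ℝ) < T ^ (-β) := Real.rpow_pos_of_pos (by linarith) _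
      have hθnβ : θ ^ (-β) = (θ ^ β)⁻¹ := by
        rw [Real.rpow_neg hθ0.le]
      have hθβ1 : θ ^ (β-1) = θ ^ β / θ := by
        rw [Real.rpow_sub hθ0, Real.rpow_one]
      rw [hθβ1, hθnβ]
      have hstep : (T ^ (-β) - (θ ^ β)⁻¹) / (-β) = ((θ ^ β)⁻¹ - T ^ (-β)) / β := by
        rw [div_neg, ← neg_div, neg_sub]
      rw [hstep]
      calc Cβ * (θ ^ β / θ) * (((θ ^ β)⁻¹ - T ^ (-β)) / β)
          ≤ Cβ * (θ ^ β / θ) * ((θ ^ β)⁻¹ / β) := by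
            apply mul_le_mul_of_nonneg_left ?_ (by positivity)
            gcongr
            linarith
        _ = Cβ / (β * θ) := by
            field_simp
    have : 2 * Cβ / (β * θ) = Cβ / (β * θ) + Cβ / (β * θ) := by ring
    linarith
  -- inner integral bound for K
  have hFbd : ∀ θ : ℝ, θ ∈ Set.Ioc (1:ℝ) T →
      (∫ w in Set.Ioc 1 T, K θ w / (θ * w)) ≤ 2 * Cβ / (β * θ) := by
    intro θ hθ
    obtain ⟨hθ1, hθT⟩ := hθ
    have hθ0 : (0:ℝ) < θ := lt_trans one_pos hθ1
    by_cases hint : IntegrableOn (fun w => K θ w / (θ * w)) (Set.Ioc 1 T)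
    · refine le_trans ?_ (hgbd θ ⟨hθ1, hθT⟩)
      apply integral_mono_ae hint (hgint θ ⟨hθ1, hθT⟩)
      have hne : ∀ᵐ w : ℝ ∂(volume.restrict (Set.Ioc (1:ℝ) T)), w ≠ θ := by
        apply ae_restrict_of_ae
        rw [ae_iff]
        simpa using measure_singleton θ
      filter_upwards [hne, ae_restrict_mem measurableSet_Ioc] with w hwne hwmem
      exact hptbd θ w hθ0 (lt_trans one_pos hwmem.1) (Ne.symm hwne)
    · rw [integral_undef hint]
      positivity
  -- the outer integrand is integrable
  have hFint : IntegrableOn (fun θ => ∫ w in Set.Ioc 1 T, K θ w / (θ * w))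
      (Set.Ioc 1 T) := by
    have h2 : Integrable (fun p : ℝ × ℝ => K p.1 p.2 / (p.1 * p.2))
        ((volume.restrict (Set.Ioc 1 T)).prod (volume.restrict (Set.Ioc 1 T))) := by
      rw [Measure.prod_restrict]
      exact hIntOn T hT
    exact h2.integral_prod_left
  -- the dominating outer function is integrable
  have hDom : IntegrableOn (fun θ : ℝ => 2 * Cβ / (β * θ)) (Set.Ioc 1 T) := by
    have hcont : ContinuousOn (fun θ : ℝ => 2 * Cβ / (β * θ)) (Set.Icc 1 T) := by
      apply continuousOn_const.div (continuousOn_const.mul continuousOn_id)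
      intro θ hθ
      have : (1:ℝ) ≤ θ := hθ.1
      exact (mul_pos hβ (by show (0:ℝ) < θ; linarith)).ne'
    exact hcont.integrableOn_Icc.mono_set Set.Ioc_subset_Icc_self
  -- put it together
  rw [hFubini T hT]
  have houter : (∫ θ in Set.Ioc 1 T, ∫ w in Set.Ioc 1 T, K θ w / (θ * w))
      ≤ ∫ θ in Set.Ioc 1 T, 2 * Cβ / (β * θ) := by
    exact setIntegral_mono_on hFint hDom measurableSet_Ioc hFbd
  have hcomp : (∫ θ in Set.Ioc 1 T, 2 * Cβ / (β * θ)) = 2 * Cβ / β * Real.log T := by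
    have : ∀ θ ∈ Set.Ioc (1:ℝ) T, 2 * Cβ / (β * θ) = (2 * Cβ / β) * θ⁻¹ := by
      intro θ hθ
      have hθ0 : (0:ℝ) < θ := lt_trans one_pos hθ.1
      field_simp
    rw [setIntegral_congr_fun measurableSet_Ioc this, integral_const_mul,
      ← intervalIntegral.integral_of_le (le_of_lt hT),
      integral_inv_of_pos one_pos (lt_trans one_pos hT)]
    rw [div_one]
  calc (Real.log T)⁻¹ ^ 2 * ∫ θ in Set.Ioc 1 T, ∫ w in Set.Ioc 1 T, K θ w / (θ * w)
      ≤ (Real.log T)⁻¹ ^ 2 * (2 * Cβ / β * Real.log T) := by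
        apply mul_le_mul_of_nonneg_left ?_ (by positivity)
        rw [← hcomp]; exact houter
    _ = 2 * Cβ / (β * Real.log T) := by
        field_simp
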